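/- arXiv:2312.14256 — 2 statements merged into one kernel-verified Lean document; each statement's English description precedes it below -/
import Mathlib

section
/- Let F be a voting method whose domain is the set of all profiles with two or three alternatives. If F satisfies anonymity, neutrality, weak positive responsiveness, near immunity to spoilers, homogeneity, and block preservation, then F is Condorcet consistent on three-alternative profiles: for any three-alternative profile P in which some alternative c has a positive margin over every other alternative (a Condorcet winner), F(P) = {c}. -/
/-!
Formalization of notions from "An extension of May's Theorem to three
alternatives: axiomatizing Minimax voting" by Holliday and Pacuit.

The set of voters is the countably infinite set `ℕ`; the set `α` of
alternatives is a type (assumed to have at least three elements where the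
paper assumes `|𝒳| ≥ 3`).
-/

namespace MayMinimax

/-- A profile: a finite set of voters drawn from the countably infinite set `ℕ`
of all voters, a finite set of alternatives, and, for each voter, a binary
relation on alternatives given as a Boolean-valued function:
`P.rel i a b = true` means that voter `i` ranks `a` above `b`. -/
structure Profile (α : Type*) where
  voters : Finset ℕ
  alts : Finset α
  rel : ℕ → α → α → Bool

variable {α : Type*} [DecidableEq α]

/-- Each voter's ballot is a strict weak order (asymmetric and negatively
transitive) on the alternatives. -/
def IsSWO (P : Profile α) : Prop :=
  ∀ i ∈ P.voters,
    (∀ a ∈ P.alts, ∀ b ∈ P.alts, P.rel i a b = true → P.rel i b a = false) ∧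
    (∀ a ∈ P.alts, ∀ b ∈ P.alts, ∀ c ∈ P.alts,
      P.rel i a b = false → P.rel i b c = false → P.rel i a c = false)

/-- The margin of `a` over `b` in `P`: the number of voters ranking `a` above
`b` minus the number of voters ranking `b` above `a`. -/
def Margin (P : Profile α) (a b : α) : ℤ :=
  ((P.voters.filter fun i => P.rel i a b = true).card : ℤ) -
    ((P.voters.filter fun i => P.rel i b a = true).card : ℤ)

/-- The number of voters ranking `a` above `b` in `P`. -/
def Support (P : Profile α) (a b : α) : ℕ :=
  (P.voters.filter fun i => P.rel i a b = true).card

/-- The Minimax score of `a`: the maximum margin of any other alternative over `a`. -/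
def MMScore (P : Profile α) (a : α) : ℤ :=
  (((P.alts.erase a).image fun b => Margin P b a).max).unbotD 0

/-- The set of Minimax winners: alternatives with minimal Minimax score. -/
def Minimax (P : Profile α) : Finset α :=
  P.alts.filter fun a => ∀ b ∈ P.alts, MMScore P a ≤ MMScore P b

/-- Restriction of a profile to a subset `Y` of the alternatives. -/
def Profile.restrict (P : Profile α) (Y : Finset α) : Profile α where
  voters := P.voters
  alts := Y
  rel := fun i a b => P.rel i a b && decide (a ∈ Y) && decide (b ∈ Y)

/-- `P.minus b` is `P` restricted to `X(P) \ {b}`. -/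
def Profile.minus (P : Profile α) (b : α) : Profile α :=
  P.restrict (P.alts.erase b)

/-- The combination `P + Q` of two profiles (used with disjoint voter sets and
the same set of alternatives). -/
def Profile.combine (P Q : Profile α) : Profile α where
  voters := P.voters ∪ Q.voters
  alts := P.alts
  rel := fun i a b => if i ∈ P.voters then P.rel i a b else Q.rel i a b

/-- `2P`: the profile `P` together with a copy of `P` on a disjoint set of voters. -/
def Profile.double (P : Profile α) : Profile α where
  voters := P.voters ∪ P.voters.image fun i => i + (P.voters.sup id + 1)
  alts := P.alts
  rel := fun i a b =>
    if i ∈ P.voters then P.rel i a b else P.rel (i - (P.voters.sup id + 1)) a b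

/-- `r` is (the strict part of) a linear order on the finite set `X`. -/
def IsLinearOn (r : α → α → Bool) (X : Finset α) : Prop :=
  (∀ a ∈ X, r a a = false) ∧
  (∀ a ∈ X, ∀ b ∈ X, ∀ c ∈ X, r a b = true → r b c = true → r a c = true) ∧
  (∀ a ∈ X, ∀ b ∈ X, a ≠ b → (r a b = true ∨ r b a = true)) ∧
  (∀ a ∈ X, ∀ b ∈ X, r a b = true → r b a = false)

/-- `Q` is a block profile for the set `X` of alternatives: it contains, for
each linear order of `X`, exactly one voter submitting that linear order, and
no other voters. -/
def IsBlock (X : Finset α) (Q : Profile α) : Prop :=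
  Q.alts = X ∧
  (∀ i ∈ Q.voters, IsLinearOn (Q.rel i) X) ∧
  (∀ r : α → α → Bool, IsLinearOn r X →
    ∃! i, i ∈ Q.voters ∧ ∀ a ∈ X, ∀ b ∈ X, Q.rel i a b = r a b)

/-- `P'` is obtained from `P` by one voter who ranked `a` uniquely last in `P`
switching to ranking `a` uniquely first in `P'`, with the restriction of that
voter's relation to `X(P) \ {a}` unchanged and all other voters' relations
unchanged. -/
def MoveLastToFirst (P P' : Profile α) (a : α) : Prop :=
  P'.voters = P.voters ∧ P'.alts = P.alts ∧ a ∈ P.alts ∧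
  ∃ i ∈ P.voters,
    (∀ b ∈ P.alts, b ≠ a → P.rel i b a = true) ∧
    (∀ b ∈ P.alts, b ≠ a → P'.rel i a b = true) ∧
    (∀ b ∈ P.alts, b ≠ a → ∀ c ∈ P.alts, c ≠ a → P'.rel i b c = P.rel i b c) ∧
    (∀ j ∈ P.voters, j ≠ i → ∀ x ∈ P.alts, ∀ y ∈ P.alts, P'.rel j x y = P.rel j x y)

/-- `P'` is obtained from `P` by adding one new voter who ranks `a` uniquely
first, all old voters' relations being unchanged. -/
def AddTopVoter (P P' : Profile α) (a : α) : Prop :=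
  P'.alts = P.alts ∧
  ∃ j, j ∉ P.voters ∧ P'.voters = insert j P.voters ∧
    (∀ b ∈ P.alts, b ≠ a → P'.rel j a b = true) ∧
    (∀ i ∈ P.voters, ∀ x ∈ P.alts, ∀ y ∈ P.alts, P'.rel i x y = P.rel i x y)

/-- `P'` is obtained from `P` by one voter improving the position of `a` in
their ballot, while nothing else changes. -/
def ImproveFor (P P' : Profile α) (a : α) : Prop :=
  P'.voters = P.voters ∧ P'.alts = P.alts ∧
  ∃ i ∈ P.voters,
    (∃ b ∈ P.alts, b ≠ a ∧
      ((P.rel i a b = false ∧ P'.rel i a b = true) ∨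
        (P.rel i b a = true ∧ P'.rel i b a = false))) ∧
    (∀ c ∈ P.alts, c ≠ a →
      (P.rel i a c = true → P'.rel i a c = true) ∧
      (P.rel i c a = false → P'.rel i c a = false)) ∧
    (∀ c ∈ P.alts, c ≠ a → ∀ d ∈ P.alts, d ≠ a → P'.rel i c d = P.rel i c d) ∧
    (∀ j ∈ P.voters, j ≠ i → ∀ x ∈ P.alts, ∀ y ∈ P.alts, P'.rel j x y = P.rel j x y)

/-- Anonymity relative to a domain `D` of profiles. -/
def Anonymity (D : Set (Profile α)) (F : Profile α → Finset α) : Prop :=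
  ∀ P ∈ D, ∀ P' ∈ D, P.alts = P'.alts →
    (∃ π : Equiv.Perm ℕ, P.voters.image π = P'.voters ∧
      ∀ i ∈ P.voters, ∀ a ∈ P.alts, ∀ b ∈ P.alts, P.rel i a b = P'.rel (π i) a b) →
    F P = F P'

/-- Neutrality relative to a domain `D` of profiles. -/
def Neutrality (D : Set (Profile α)) (F : Profile α → Finset α) : Prop :=
  ∀ P ∈ D, ∀ P' ∈ D, P.voters = P'.voters →
    ∀ τ : Equiv.Perm α, P.alts.image τ = P'.alts →
      (∀ i ∈ P.voters, ∀ a ∈ P.alts, ∀ b ∈ P.alts, P.rel i a b = P'.rel i (τ a) (τ b)) →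
      (F P).image τ = F P'

/-- Weak positive responsiveness relative to a domain `D` of profiles. -/
def WeakPositiveResponsiveness (D : Set (Profile α)) (F : Profile α → Finset α) : Prop :=
  ∀ P ∈ D, ∀ P' ∈ D, ∀ a ∈ F P, MoveLastToFirst P P' a → F P' = {a}

/-- (Full) positive responsiveness relative to a domain `D` of profiles. -/
def PositiveResponsiveness (D : Set (Profile α)) (F : Profile α → Finset α) : Prop :=
  ∀ P ∈ D, ∀ P' ∈ D, ∀ a ∈ F P, ImproveFor P P' a → F P' = {a}

/-- Positive involvement relative to a domain `D` of profiles. -/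
def PositiveInvolvement (D : Set (Profile α)) (F : Profile α → Finset α) : Prop :=
  ∀ P ∈ D, ∀ P' ∈ D, ∀ a ∈ F P, AddTopVoter P P' a → a ∈ F P'

/-- Near immunity to spoilers relative to a domain `D` of profiles. -/
def NearImmunityToSpoilers (D : Set (Profile α)) (F : Profile α → Finset α) : Prop :=
  ∀ P ∈ D, ∀ a ∈ P.alts, ∀ b ∈ P.alts,
    P.minus b ∈ D → P.restrict {a, b} ∈ D →
    F (P.minus b) = {a} → F (P.restrict {a, b}) = {a} → b ∉ F P → a ∈ F P

/-- Immunity to spoilers relative to a domain `D` of profiles. -/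
def ImmunityToSpoilers (D : Set (Profile α)) (F : Profile α → Finset α) : Prop :=
  ∀ P ∈ D, ∀ a ∈ P.alts, ∀ b ∈ P.alts,
    P.minus b ∈ D → P.restrict {a, b} ∈ D →
    a ∈ F (P.minus b) → F (P.restrict {a, b}) = {a} → b ∉ F P → a ∈ F P

/-- (Inclusion) homogeneity relative to a domain `D` of profiles. -/
def Homogeneity (D : Set (Profile α)) (F : Profile α → Finset α) : Prop :=
  ∀ P ∈ D, P.double ∈ D ∧ F P ⊆ F P.double

/-- Block preservation relative to a domain `D` of profiles. -/
def BlockPreservation (D : Set (Profile α)) (F : Profile α → Finset α) : Prop :=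
  ∀ P ∈ D, ∀ Q ∈ D, Disjoint P.voters Q.voters → IsBlock P.alts Q →
    P.combine Q ∈ D ∧ F P ⊆ F (P.combine Q)

/-- Condorcet consistency relative to a domain `D` of profiles. -/
def CondorcetConsistent (D : Set (Profile α)) (F : Profile α → Finset α) : Prop :=
  ∀ P ∈ D, ∀ c ∈ P.alts, (∀ x ∈ P.alts, x ≠ c → 0 < Margin P c x) → F P = {c}

/-- The domain of all (strict-weak-order) profiles with exactly two alternatives. -/
def Dom2 (α : Type*) : Set (Profile α) :=
  {P | IsSWO P ∧ P.voters.Nonempty ∧ P.alts.card = 2}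

/-- The domain of all profiles with two or three alternatives. -/
def Dom23 (α : Type*) : Set (Profile α) :=
  {P | IsSWO P ∧ P.voters.Nonempty ∧ (P.alts.card = 2 ∨ P.alts.card = 3)}

/-- The domain of all profiles with at least two alternatives. -/
def DomGe2 (α : Type*) : Set (Profile α) :=
  {P | IsSWO P ∧ P.voters.Nonempty ∧ 2 ≤ P.alts.card}

/-- The domain of all profiles. -/
def DomAll (α : Type*) : Set (Profile α) :=
  {P | IsSWO P ∧ P.voters.Nonempty ∧ P.alts.Nonempty}

/-- The support-based Minimax score of `a`: the maximum of `Support P b a`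
over all `b` with a positive margin over `a` (`0` if there is no such `b`). -/
def SupportMMScore (P : Profile α) (a : α) : ℕ :=
  ((((P.alts.erase a).filter fun b => 0 < Margin P b a).image fun b =>
    Support P b a).max).unbotD 0

/-- Support-based Minimax: alternatives with minimal support-based Minimax score. -/
def SupportMinimax (P : Profile α) : Finset α :=
  P.alts.filter fun a => ∀ b ∈ P.alts, SupportMMScore P a ≤ SupportMMScore P b

/-- The set of weak Condorcet winners in `P`. -/
def WeakCondorcetWinners (P : Profile α) : Finset α :=
  P.alts.filter fun a => ∀ x ∈ P.alts, 0 ≤ Margin P a x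

/-- The plurality score of `a`: the number of voters ranking `a` uniquely first. -/
def PluralityScore (P : Profile α) (a : α) : ℕ :=
  (P.voters.filter fun i => ∀ b ∈ P.alts, b ≠ a → P.rel i a b = true).card

/-- The Condorcet-Plurality voting method: the weak Condorcet winners if there
are any; otherwise the alternatives with maximal plurality score. -/
def CP (P : Profile α) : Finset α :=
  if (WeakCondorcetWinners P).Nonempty then WeakCondorcetWinners P
  else P.alts.filter fun a => ∀ b ∈ P.alts, PluralityScore P b ≤ PluralityScore P a

/-- The marginal Borda score of `a`: the sum of the margins of `a` over the
alternatives. -/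
def MarginalBorda (P : Profile α) (a : α) : ℤ :=
  ∑ b ∈ P.alts, Margin P a b

/-- Minimax MB: the Minimax winners with greatest marginal Borda score. -/
def MinimaxMB (P : Profile α) : Finset α :=
  (Minimax P).filter fun a => ∀ b ∈ Minimax P, MarginalBorda P b ≤ MarginalBorda P a

/-- `P` and `P'` have the same ordinal margin graph. -/
def SameOrdinalMarginGraph (P P' : Profile α) : Prop :=
  P.alts = P'.alts ∧
  (∀ a ∈ P.alts, ∀ b ∈ P.alts, (0 < Margin P a b ↔ 0 < Margin P' a b)) ∧
  (∀ a ∈ P.alts, ∀ b ∈ P.alts, ∀ c ∈ P.alts, ∀ d ∈ P.alts,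
    (Margin P c d ≤ Margin P a b ↔ Margin P' c d ≤ Margin P' a b))

/-- Ordinal margin invariance relative to a domain `D` of profiles. -/
def OrdinalMarginInvariance (D : Set (Profile α)) (F : Profile α → Finset α) : Prop :=
  ∀ P ∈ D, ∀ P' ∈ D, SameOrdinalMarginGraph P P' → F P = F P'

/-- `P` is uniquely-weighted: distinct pairs of distinct alternatives have
distinct margins. -/
def UniquelyWeighted (P : Profile α) : Prop :=
  ∀ a ∈ P.alts, ∀ b ∈ P.alts, ∀ c ∈ P.alts, ∀ d ∈ P.alts,
    a ≠ b → c ≠ d → (a, b) ≠ (c, d) → Margin P a b ≠ Margin P c d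


/-! ### Auxiliary lemmas -/

section Aux

lemma swo_asym {P : Profile α} (h : IsSWO P) {i : ℕ} (hi : i ∈ P.voters)
    {a b : α} (ha : a ∈ P.alts) (hb : b ∈ P.alts) (hab : P.rel i a b = true) :
    P.rel i b a = false := (h i hi).1 a ha b hb hab

lemma swo_irrefl {P : Profile α} (h : IsSWO P) {i : ℕ} (hi : i ∈ P.voters)
    {a : α} (ha : a ∈ P.alts) : P.rel i a a = false := by
  cases hr : P.rel i a a with
  | false => rfl
  | true => have := (h i hi).1 a ha a ha hr; simp [hr] at this

lemma filter_eq_erase {s : Finset ℕ} {p q : ℕ → Prop} [DecidablePred p] [DecidablePred q]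
    {v : ℕ} (hv : v ∈ s) (hpv : p v) (hqv : ¬ q v)
    (hag : ∀ i, i ≠ v → (p i ↔ q i)) :
    s.filter q = (s.filter p).erase v := by
  ext i
  by_cases hiv : i = v
  · subst hiv; simp [hqv]
  · simp [Finset.mem_erase, Finset.mem_filter, hiv, hag i hiv]

lemma filter_eq_insert {s : Finset ℕ} {p q : ℕ → Prop} [DecidablePred p] [DecidablePred q]
    {v : ℕ} (hv : v ∈ s) (hpv : ¬ p v) (hqv : q v)
    (hag : ∀ i, i ≠ v → (p i ↔ q i)) :
    s.filter q = insert v (s.filter p) := by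
  ext i
  by_cases hiv : i = v
  · subst hiv; simp [hqv, hv]
  · simp [Finset.mem_insert, Finset.mem_filter, hiv, hag i hiv]

/-- Updating a single voter's ballot. -/
def Profile.updateVoter (P : Profile α) (v : ℕ) (b : α → α → Bool) : Profile α :=
  ⟨P.voters, P.alts, fun i => if i = v then b else P.rel i⟩

lemma margin_update_same {P : Profile α} {v : ℕ} {b : α → α → Bool} {x y : α}
    (h1 : b x y = P.rel v x y) (h2 : b y x = P.rel v y x) :
    Margin (P.updateVoter v b) x y = Margin P x y := by
  unfold Margin Profile.updateVoter
  have e1 : P.voters.filter (fun i => ((fun i => if i = v then b else P.rel i) i x y) = true)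
      = P.voters.filter (fun i => P.rel i x y = true) := by
    apply Finset.filter_congr
    intro i _
    by_cases hiv : i = v <;> simp [hiv, h1]
  have e2 : P.voters.filter (fun i => ((fun i => if i = v then b else P.rel i) i y x) = true)
      = P.voters.filter (fun i => P.rel i y x = true) := by
    apply Finset.filter_congr
    intro i _
    by_cases hiv : i = v <;> simp [hiv, h2]
  rw [e1, e2]

lemma margin_update_flip {P : Profile α} {v : ℕ} (hv : v ∈ P.voters) {b : α → α → Bool} {x y : α}
    (hxy : P.rel v x y = true) (hyx : P.rel v y x = false)
    (h1 : b x y = false) (h2 : b y x = true) :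
    Margin (P.updateVoter v b) x y = Margin P x y - 2 := by
  unfold Margin Profile.updateVoter
  have e1 : P.voters.filter (fun i => ((fun i => if i = v then b else P.rel i) i x y) = true)
      = (P.voters.filter (fun i => P.rel i x y = true)).erase v := by
    apply filter_eq_erase hv hxy
    · simp [h1]
    · intro i hiv; simp [hiv]
  have e2 : P.voters.filter (fun i => ((fun i => if i = v then b else P.rel i) i y x) = true)
      = insert v (P.voters.filter (fun i => P.rel i y x = true)) := by
    apply filter_eq_insert hv
    · simp [hyx]
    · simp [h2]
    · intro i hiv; simp [hiv]
  rw [e1, e2]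
  have hm : v ∈ P.voters.filter (fun i => P.rel i x y = true) := by
    simp [Finset.mem_filter, hv, hxy]
  have hnm : v ∉ P.voters.filter (fun i => P.rel i y x = true) := by
    simp [Finset.mem_filter, hyx]
  rw [Finset.card_erase_of_mem hm, Finset.card_insert_of_notMem hnm]
  have h1 : 1 ≤ (P.voters.filter (fun i => P.rel i x y = true)).card :=
    Finset.card_pos.2 ⟨v, hm⟩
  push_cast [Nat.cast_sub h1]
  ring

lemma margin_restrict {P : Profile α} {Y : Finset α} {x y : α} (hx : x ∈ Y) (hy : y ∈ Y) :
    Margin (P.restrict Y) x y = Margin P x y := by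
  unfold Margin Profile.restrict
  simp [hx, hy]

lemma isSWO_restrict {P : Profile α} (h : IsSWO P) {Y : Finset α} (hY : Y ⊆ P.alts) :
    IsSWO (P.restrict Y) := by
  intro i hi
  have hi' : i ∈ P.voters := hi
  constructor
  · intro a ha b hb hab
    simp only [Profile.restrict, Bool.and_eq_true, decide_eq_true_eq] at hab ⊢
    have := (h i hi').1 a (hY ha) b (hY hb) hab.1.1
    simp [this]
  · intro a ha b hb c hc hab hbc
    simp only [Profile.restrict, Bool.and_eq_true, decide_eq_true_eq,
      Bool.and_eq_false_iff, decide_eq_false_iff_not] at hab hbc ⊢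
    have hab' : P.rel i a b = false := by
      rcases hab with (h' | h') | h'
      · exact h'
      · exact absurd ha h'
      · exact absurd hb h'
    have hbc' : P.rel i b c = false := by
      rcases hbc with (h' | h') | h'
      · exact h'
      · exact absurd hb h'
      · exact absurd hc h'
    left; left
    exact (h i hi').2 a (hY ha) b (hY hb) c (hY hc) hab' hbc'

lemma margin_double (P : Profile α) (x y : α) :
    Margin P.double x y = 2 * Margin P x y := by
  have key : ∀ u w : α,
      (P.double.voters.filter (fun i => P.double.rel i u w = true)).card
        = 2 * (P.voters.filter (fun i => P.rel i u w = true)).card := by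
    intro u w
    set K := P.voters.sup id + 1 with hK
    have hout : ∀ i : ℕ, i + K ∉ P.voters := by
      intro i h
      have := Finset.le_sup (f := id) h
      simp only [id] at this
      omega
    have hdisj : Disjoint P.voters (P.voters.image (fun i => i + K)) := by
      rw [Finset.disjoint_right]
      intro j hj hjv
      obtain ⟨i, _, rfl⟩ := Finset.mem_image.1 hj
      exact hout i hjv
    show ((P.voters ∪ P.voters.image (fun i => i + K)).filter
        (fun i => (if i ∈ P.voters then P.rel i u w else P.rel (i - K) u w) = true)).card = _
    rw [Finset.filter_union, Finset.card_union_of_disjoint (Finset.disjoint_filter_filter hdisj)]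
    have e1 : P.voters.filter (fun i => (if i ∈ P.voters then P.rel i u w else P.rel (i - K) u w) = true)
        = P.voters.filter (fun i => P.rel i u w = true) := by
      apply Finset.filter_congr; intro i hi; simp [hi]
    have e2 : (P.voters.image (fun i => i + K)).filter
        (fun i => (if i ∈ P.voters then P.rel i u w else P.rel (i - K) u w) = true)
        = (P.voters.filter (fun i => P.rel i u w = true)).image (fun i => i + K) := by
      rw [Finset.filter_image]
      congr 1
      apply Finset.filter_congr
      intro i _
      simp [hout i]
    rw [e1, e2, Finset.card_image_of_injective _ (add_left_injective K)]
    ring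
  unfold Margin
  rw [key, key]
  push_cast
  ring

/-- A function swapping two disjoint finsets via a bijection `e`. -/
def swapFun (S T : Finset ℕ) (e : {i // i ∈ S} ≃ {i // i ∈ T}) : ℕ → ℕ := fun i =>
  if h : i ∈ S then (e ⟨i, h⟩ : ℕ) else if h : i ∈ T then (e.symm ⟨i, h⟩ : ℕ) else i

lemma swapFun_involutive (S T : Finset ℕ) (e : {i // i ∈ S} ≃ {i // i ∈ T})
    (hd : Disjoint S T) : Function.Involutive (swapFun S T e) := by
  intro i
  unfold swapFun
  by_cases h1 : i ∈ S
  · rw [dif_pos h1]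
    have hT : (e ⟨i, h1⟩ : ℕ) ∈ T := (e ⟨i, h1⟩).2
    have hS : (e ⟨i, h1⟩ : ℕ) ∉ S := fun hh => (Finset.disjoint_left.1 hd hh) hT
    rw [dif_neg hS, dif_pos hT]
    simp
  · rw [dif_neg h1]
    by_cases h2 : i ∈ T
    · rw [dif_pos h2]
      have hS : (e.symm ⟨i, h2⟩ : ℕ) ∈ S := (e.symm ⟨i, h2⟩).2
      rw [dif_pos hS]
      simp
    · rw [dif_neg h2, dif_neg h1, dif_neg h2]

lemma swapFun_image {S T V : Finset ℕ} (e : {i // i ∈ S} ≃ {i // i ∈ T})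
    (hd : Disjoint S T) (hS : S ⊆ V) (hT : T ⊆ V) :
    V.image (swapFun S T e) = V := by
  have hinj := (swapFun_involutive S T e hd).injective
  apply Finset.eq_of_subset_of_card_le
  · intro j hj
    obtain ⟨i, hi, rfl⟩ := Finset.mem_image.1 hj
    unfold swapFun
    by_cases h1 : i ∈ S
    · rw [dif_pos h1]; exact hT (e ⟨i, h1⟩).2
    · rw [dif_neg h1]
      by_cases h2 : i ∈ T
      · rw [dif_pos h2]; exact hS (e.symm ⟨i, h2⟩).2
      · rwa [dif_neg h2]
  · rw [Finset.card_image_of_injective _ hinj]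

lemma two_alt_swap (F : Profile α → Finset α)
    (anon : Anonymity (Dom23 α) F) (neut : Neutrality (Dom23 α) F)
    {R R' : Profile α} (hR : R ∈ Dom23 α) (hR' : R' ∈ Dom23 α)
    {x y : α} (hxy : x ≠ y) (halts : R.alts = {x, y})
    (hv : R'.voters = R.voters) (ha : R'.alts = R.alts)
    (f : ℕ → ℕ) (hf : Function.Involutive f)
    (hfV : R.voters.image f = R.voters)
    (hcond : ∀ i ∈ R.voters, ∀ u ∈ R.alts, ∀ w ∈ R.alts,
      R.rel i (Equiv.swap x y u) (Equiv.swap x y w) = R'.rel (f i) u w) :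
    (F R).image (Equiv.swap x y) = F R' := by
  set τ := Equiv.swap x y with hτ
  set Rt : Profile α := ⟨R.voters, R.alts, fun i u w => R.rel i (τ u) (τ w)⟩ with hRt
  have hτalts : ∀ u ∈ R.alts, τ u ∈ R.alts := by
    intro u hu
    rw [halts] at hu ⊢
    rcases Finset.mem_insert.1 hu with rfl | hu
    · simp [hτ, Equiv.swap_apply_left]
    · rw [Finset.mem_singleton.1 hu]; simp [hτ, Equiv.swap_apply_right]
  have hRtD : Rt ∈ Dom23 α := by
    obtain ⟨hswo, hne, hcard⟩ := hR
    refine ⟨?_, hne, hcard⟩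
    intro i hi
    constructor
    · intro a haa b hb hab
      exact (hswo i hi).1 _ (hτalts a haa) _ (hτalts b hb) hab
    · intro a haa b hb c hc h1 h2
      exact (hswo i hi).2 _ (hτalts a haa) _ (hτalts b hb) _ (hτalts c hc) h1 h2
  have himg : R.alts.image τ = Rt.alts := by
    show R.alts.image τ = R.alts
    rw [halts]
    ext u
    simp only [Finset.mem_image, Finset.mem_insert, Finset.mem_singleton]
    constructor
    · rintro ⟨w, hw, rfl⟩
      rcases hw with rfl | rfl <;> simp [hτ]
    · rintro (rfl | rfl)
      · exact ⟨y, Or.inr rfl, by simp [hτ]⟩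
      · exact ⟨x, Or.inl rfl, by simp [hτ]⟩
  have h1 : (F R).image τ = F Rt := by
    apply neut R hR Rt hRtD rfl τ himg
    intro i hi a haa b hb
    show R.rel i a b = R.rel i (τ (τ a)) (τ (τ b))
    simp [hτ, Equiv.swap_apply_self]
  have h2 : F Rt = F R' := by
    apply anon Rt hRtD R' hR' (show Rt.alts = R'.alts from ha.symm)
    refine ⟨Function.Involutive.toPerm f hf, ?_, ?_⟩
    · show R.voters.image f = R'.voters
      rw [hv, hfV]
    · intro i hi a haa b hb
      exact hcond i hi a haa b hb
  rw [h1, h2]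

lemma mem_voters_of_swapFun {S T V : Finset ℕ} (e : {i // i ∈ S} ≃ {i // i ∈ T})
    (hd : Disjoint S T) (hS : S ⊆ V) (hT : T ⊆ V) {i : ℕ} (hi : i ∈ V) :
    swapFun S T e i ∈ V := by
  rw [← swapFun_image e hd hS hT]
  exact Finset.mem_image_of_mem _ hi

lemma margin_zero_symm (F : Profile α → Finset α)
    (anon : Anonymity (Dom23 α) F) (neut : Neutrality (Dom23 α) F)
    {R : Profile α} (hR : R ∈ Dom23 α) {x y : α} (hxy : x ≠ y) (halts : R.alts = {x, y})
    (hm : Margin R x y = 0) : (F R).image (Equiv.swap x y) = F R := by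
  obtain ⟨hswo, hvne, hcard⟩ := id hR
  have hx : x ∈ R.alts := by rw [halts]; simp
  have hy : y ∈ R.alts := by rw [halts]; simp
  set S := R.voters.filter (fun i => R.rel i x y = true) with hSdef
  set T := R.voters.filter (fun i => R.rel i y x = true) with hTdef
  have hcards : S.card = T.card := by
    have h0 : (S.card : ℤ) - T.card = 0 := hm
    omega
  have hd : Disjoint S T := by
    rw [Finset.disjoint_left]
    intro i hiS hiT
    rw [hSdef, Finset.mem_filter] at hiS
    rw [hTdef, Finset.mem_filter] at hiT
    have := swo_asym hswo hiS.1 hx hy hiS.2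
    rw [this] at hiT
    exact absurd hiT.2 (by simp)
  set e := Finset.equivOfCardEq hcards with he
  set f := swapFun S T e with hfdef
  have hfV : R.voters.image f = R.voters :=
    swapFun_image e hd (Finset.filter_subset _ _) (Finset.filter_subset _ _)
  apply two_alt_swap F anon neut hR hR hxy halts rfl rfl f
    (swapFun_involutive S T e hd) hfV
  intro i hi u hu w hw
  have hfiV : f i ∈ R.voters :=
    mem_voters_of_swapFun e hd (Finset.filter_subset _ _) (Finset.filter_subset _ _) hi
  have key : R.rel i x y = R.rel (f i) y x ∧ R.rel i y x = R.rel (f i) x y := by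
    by_cases hiS : i ∈ S
    · have hfi : f i = (e ⟨i, hiS⟩ : ℕ) := dif_pos hiS
      have hfiT : f i ∈ T := by rw [hfi]; exact (e ⟨i, hiS⟩).2
      have h1 := (Finset.mem_filter.1 hiS).2
      have h2 := (Finset.mem_filter.1 hfiT).2
      exact ⟨by rw [h1, h2], by rw [swo_asym hswo hi hx hy h1,
        swo_asym hswo hfiV hy hx h2]⟩
    · by_cases hiT : i ∈ T
      · have hfi : f i = (e.symm ⟨i, hiT⟩ : ℕ) := by
          rw [hfdef]; unfold swapFun; rw [dif_neg hiS, dif_pos hiT]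
        have hfiS : f i ∈ S := by rw [hfi]; exact (e.symm ⟨i, hiT⟩).2
        have h1 := (Finset.mem_filter.1 hiT).2
        have h2 := (Finset.mem_filter.1 hfiS).2
        exact ⟨by rw [swo_asym hswo hi hy hx h1, swo_asym hswo hfiV hx hy h2],
          by rw [h1, h2]⟩
      · have hfi : f i = i := by
          rw [hfdef]; unfold swapFun; rw [dif_neg hiS, dif_neg hiT]
        have h1 : R.rel i x y = false := by
          cases hc : R.rel i x y with
          | false => rfl
          | true => exact absurd (Finset.mem_filter.2 ⟨hi, hc⟩) hiS
        have h2 : R.rel i y x = false := by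
          cases hc : R.rel i y x with
          | false => rfl
          | true => exact absurd (Finset.mem_filter.2 ⟨hi, hc⟩) hiT
        rw [hfi, h1, h2]
        exact ⟨rfl, rfl⟩
  have hmem : ∀ u ∈ R.alts, u = x ∨ u = y := by
    intro u hu; rw [halts] at hu; simpa using hu
  rcases hmem u hu with rfl | rfl <;> rcases hmem w hw with rfl | rfl
  · rw [Equiv.swap_apply_left, swo_irrefl hswo hi hy, swo_irrefl hswo hfiV hu]
  · rw [Equiv.swap_apply_left, Equiv.swap_apply_right]
    exact key.2
  · rw [Equiv.swap_apply_right, Equiv.swap_apply_left]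
    exact key.1
  · rw [Equiv.swap_apply_right, swo_irrefl hswo hi hx, swo_irrefl hswo hfiV hu]

lemma two_alt_no_loser (F : Profile α → Finset α)
    (anon : Anonymity (Dom23 α) F) (neut : Neutrality (Dom23 α) F)
    (wpr : WeakPositiveResponsiveness (Dom23 α) F) :
    ∀ m : ℕ, ∀ R ∈ Dom23 α, ∀ x y : α, x ≠ y → R.alts = {x, y} →
      Margin R x y = (m : ℤ) + 1 → y ∉ F R := by
  intro m
  induction m using Nat.strong_induction_on with
  | _ m IH =>
  intro R hR x y hxy halts hmar hyF
  obtain ⟨hswo, hvne, hcard⟩ := id hR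
  have hx : x ∈ R.alts := by rw [halts]; simp
  have hy : y ∈ R.alts := by rw [halts]; simp
  have hmem : ∀ u ∈ R.alts, u = x ∨ u = y := by
    intro u hu; rw [halts] at hu; simpa using hu
  set S := R.voters.filter (fun i => R.rel i x y = true) with hSdef
  set T := R.voters.filter (fun i => R.rel i y x = true) with hTdef
  have hmar' : (S.card : ℤ) - T.card = (m : ℤ) + 1 := hmar
  have hSne : S.Nonempty := by
    rw [← Finset.card_pos]
    omega
  obtain ⟨v, hvS⟩ := hSne
  have hv : v ∈ R.voters := (Finset.mem_filter.1 hvS).1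
  have hvxy : R.rel v x y = true := (Finset.mem_filter.1 hvS).2
  have hvyx : R.rel v y x = false := swo_asym hswo hv hx hy hvxy
  have hvT : v ∉ T := by
    intro h
    have h2 := (Finset.mem_filter.1 h).2
    rw [hvyx] at h2
    simp at h2
  set bal : α → α → Bool := fun u w => decide (u = y) && decide (w = x) with hbal
  have hbalyx : bal y x = true := by simp [hbal]
  have hbalxy : bal x y = false := by simp [hbal, hxy]
  have hbalxx : bal x x = false := by simp [hbal, hxy]
  have hbalyy : bal y y = false := by simp [hbal, Ne.symm hxy]
  have hbal_val : ∀ u w, bal u w = true ↔ (u = y ∧ w = x) := by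
    intro u w; simp [hbal]
  set R₁ := R.updateVoter v bal with hR₁def
  have hrelv : R₁.rel v = bal := by
    show (if v = v then bal else R.rel v) = bal
    rw [if_pos rfl]
  have hrelne : ∀ j, j ≠ v → R₁.rel j = R.rel j := by
    intro j hj
    show (if j = v then bal else R.rel j) = R.rel j
    rw [if_neg hj]
  have hR₁swo : IsSWO R₁ := by
    intro i hi
    have hi' : i ∈ R.voters := hi
    by_cases hiv : i = v
    · have hri : R₁.rel i = bal := by rw [hiv, hrelv]
      constructor
      · intro a ha b hb hab
        rw [hri] at hab ⊢
        obtain ⟨rfl, rfl⟩ := (hbal_val a b).1 hab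
        exact hbalxy
      · intro a ha b hb c hc hab hbc
        rw [hri] at hab hbc ⊢
        cases hac : bal a c with
        | false => rfl
        | true =>
          obtain ⟨hay, hcx⟩ := (hbal_val a c).1 hac
          rcases hmem b hb with hbx | hby
          · rw [hay, hbx, hbalyx] at hab; exact hab
          · rw [hby, hcx, hbalyx] at hbc; exact hbc
    · have hri : R₁.rel i = R.rel i := hrelne i hiv
      constructor
      · intro a ha b hb hab
        rw [hri] at hab ⊢
        exact (hswo i hi').1 a ha b hb hab
      · intro a ha b hb c hc hab hbc
        rw [hri] at hab hbc ⊢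
        exact (hswo i hi').2 a ha b hb c hc hab hbc
  have hR₁D : R₁ ∈ Dom23 α := ⟨hR₁swo, hvne, hcard⟩
  have hmove : MoveLastToFirst R R₁ y := by
    refine ⟨rfl, rfl, hy, v, hv, ?_, ?_, ?_, ?_⟩
    · intro b hb hby
      rcases hmem b hb with rfl | rfl
      · exact hvxy
      · exact absurd rfl hby
    · intro b hb hby
      rcases hmem b hb with rfl | rfl
      · rw [hrelv]; exact hbalyx
      · exact absurd rfl hby
    · intro b hb hby c hc hcy
      rcases hmem b hb with rfl | rfl
      · rcases hmem c hc with rfl | rfl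
        · rw [hrelv, hbalxx, swo_irrefl hswo hv hx]
        · exact absurd rfl hcy
      · exact absurd rfl hby
    · intro j hj hjv a ha b hb
      rw [hrelne j hjv]
  have hFR₁ : F R₁ = {y} := wpr R hR R₁ hR₁D y hyF hmove
  have hmar₁ : Margin R₁ x y = (m : ℤ) - 1 := by
    have h2 := margin_update_flip (P := R) (b := bal) hv hvxy hvyx hbalxy hbalyx
    rw [hmar] at h2
    rw [show Margin R₁ x y = (m : ℤ) + 1 - 2 from h2]
    ring
  obtain _ | _ | k := m
  · -- m = 0 : R₁ is the alternative-swap of R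
    have hSune : v ∉ S.erase v := Finset.notMem_erase v S
    have hd0 : Disjoint S T := by
      rw [Finset.disjoint_left]
      intro i hiS hiT
      have h1 := (Finset.mem_filter.1 hiS).2
      have h2 := (Finset.mem_filter.1 hiT).2
      rw [swo_asym hswo (Finset.mem_filter.1 hiS).1 hx hy h1] at h2
      exact absurd h2 (by simp)
    have hd : Disjoint (S.erase v) T := hd0.mono_left (Finset.erase_subset v S)
    have hcards : (S.erase v).card = T.card := by
      rw [Finset.card_erase_of_mem hvS]
      omega
    set e := Finset.equivOfCardEq hcards with he
    set f := swapFun (S.erase v) T e with hfdef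
    have hfV : R.voters.image f = R.voters :=
      swapFun_image e hd ((Finset.erase_subset _ _).trans (Finset.filter_subset _ _))
        (Finset.filter_subset _ _)
    have hcond : ∀ i ∈ R.voters, ∀ u ∈ R.alts, ∀ w ∈ R.alts,
        R.rel i (Equiv.swap x y u) (Equiv.swap x y w) = R₁.rel (f i) u w := by
      intro i hi u hu w hw
      have hfiV : f i ∈ R.voters :=
        mem_voters_of_swapFun e hd ((Finset.erase_subset _ _).trans (Finset.filter_subset _ _))
          (Finset.filter_subset _ _) hi
      have key : R.rel i x y = R₁.rel (f i) y x ∧ R.rel i y x = R₁.rel (f i) x y ∧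
          R₁.rel (f i) x x = false ∧ R₁.rel (f i) y y = false := by
        by_cases hiS' : i ∈ S.erase v
        · have hfi : f i = (e ⟨i, hiS'⟩ : ℕ) := dif_pos hiS'
          have hfiT : f i ∈ T := by rw [hfi]; exact (e ⟨i, hiS'⟩).2
          have hfine : f i ≠ v := fun h => hvT (h ▸ hfiT)
          have hrfi : R₁.rel (f i) = R.rel (f i) := hrelne _ hfine
          have h1 := (Finset.mem_filter.1 (Finset.mem_of_mem_erase hiS')).2
          have h2 := (Finset.mem_filter.1 hfiT).2
          refine ⟨?_, ?_, ?_, ?_⟩ <;> rw [hrfi]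
          · rw [h1, h2]
          · rw [swo_asym hswo hi hx hy h1, swo_asym hswo hfiV hy hx h2]
          · exact swo_irrefl hswo hfiV hx
          · exact swo_irrefl hswo hfiV hy
        · by_cases hiT : i ∈ T
          · have hfi : f i = (e.symm ⟨i, hiT⟩ : ℕ) := by
              rw [hfdef]; unfold swapFun; rw [dif_neg hiS', dif_pos hiT]
            have hfiS' : f i ∈ S.erase v := by rw [hfi]; exact (e.symm ⟨i, hiT⟩).2
            have hfine : f i ≠ v := (Finset.mem_erase.1 hfiS').1
            have hrfi : R₁.rel (f i) = R.rel (f i) := hrelne _ hfine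
            have h1 := (Finset.mem_filter.1 hiT).2
            have h2 := (Finset.mem_filter.1 (Finset.mem_of_mem_erase hfiS')).2
            refine ⟨?_, ?_, ?_, ?_⟩ <;> rw [hrfi]
            · rw [swo_asym hswo hi hy hx h1, swo_asym hswo hfiV hx hy h2]
            · rw [h1, h2]
            · exact swo_irrefl hswo hfiV hx
            · exact swo_irrefl hswo hfiV hy
          · have hfi : f i = i := by
              rw [hfdef]; unfold swapFun; rw [dif_neg hiS', dif_neg hiT]
            rw [hfi]
            by_cases hiv : i = v
            · have hri : R₁.rel i = bal := by rw [hiv, hrelv]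
              rw [hri, hiv, hbalyx, hbalxy, hbalxx, hbalyy]
              exact ⟨hvxy, hvyx, rfl, rfl⟩
            · have hri : R₁.rel i = R.rel i := hrelne i hiv
              have hiS : i ∉ S := fun h => hiS' (Finset.mem_erase.2 ⟨hiv, h⟩)
              have h1 : R.rel i x y = false := by
                cases hc : R.rel i x y with
                | false => rfl
                | true => exact absurd (Finset.mem_filter.2 ⟨hi, hc⟩) hiS
              have h2 : R.rel i y x = false := by
                cases hc : R.rel i y x with
                | false => rfl
                | true => exact absurd (Finset.mem_filter.2 ⟨hi, hc⟩) hiT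
              rw [hri, h1, h2]
              exact ⟨rfl, rfl, swo_irrefl hswo hi hx, swo_irrefl hswo hi hy⟩
      rcases hmem u hu with rfl | rfl <;> rcases hmem w hw with rfl | rfl
      · rw [Equiv.swap_apply_left, swo_irrefl hswo hi hy, key.2.2.1]
      · rw [Equiv.swap_apply_left, Equiv.swap_apply_right]
        exact key.2.1
      · rw [Equiv.swap_apply_right, Equiv.swap_apply_left]
        exact key.1
      · rw [Equiv.swap_apply_right, swo_irrefl hswo hi hx, key.2.2.2]
    have himg := two_alt_swap F anon neut hR hR₁D hxy halts rfl rfl f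
      (swapFun_involutive _ _ e hd) hfV hcond
    rw [hFR₁] at himg
    have hxmem : x ∈ (F R).image (Equiv.swap x y) :=
      Finset.mem_image.2 ⟨y, hyF, Equiv.swap_apply_right x y⟩
    rw [himg, Finset.mem_singleton] at hxmem
    exact hxy hxmem
  · -- m = 1: R₁ has margin zero
    have hmar₁0 : Margin R₁ x y = 0 := by rw [hmar₁]; norm_num
    have hsym := margin_zero_symm F anon neut hR₁D hxy halts hmar₁0
    rw [hFR₁, Finset.image_singleton, Equiv.swap_apply_right] at hsym
    exact hxy (Finset.singleton_inj.1 hsym)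
  · -- m = k + 2: induction
    have hyF₁ : y ∈ F R₁ := by rw [hFR₁]; exact Finset.mem_singleton_self y
    refine IH k (by omega) R₁ hR₁D x y hxy halts ?_ hyF₁
    rw [hmar₁]
    push_cast
    ring

lemma two_alt_majority (F : Profile α → Finset α)
    (hF : ∀ P ∈ Dom23 α, (F P).Nonempty ∧ F P ⊆ P.alts)
    (anon : Anonymity (Dom23 α) F) (neut : Neutrality (Dom23 α) F)
    (wpr : WeakPositiveResponsiveness (Dom23 α) F)
    {R : Profile α} (hR : R ∈ Dom23 α) {x y : α} (hx : x ∈ R.alts) (hy : y ∈ R.alts)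
    (hxy : x ≠ y) (hc2 : R.alts.card = 2) (hm : 0 < Margin R x y) : F R = {x} := by
  have halts : R.alts = {x, y} := by
    refine (Finset.eq_of_subset_of_card_le ?_ ?_).symm
    · intro u hu
      rcases Finset.mem_insert.1 hu with rfl | hu
      · exact hx
      · rw [Finset.mem_singleton.1 hu]; exact hy
    · rw [hc2, Finset.card_insert_of_notMem (by simp [hxy]), Finset.card_singleton]
  have hmar : Margin R x y = ((Margin R x y).toNat - 1 : ℕ) + 1 := by omega
  have hnoty : y ∉ F R :=
    two_alt_no_loser F anon neut wpr ((Margin R x y).toNat - 1) R hR x y hxy halts hmar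
  obtain ⟨hne, hsub⟩ := hF R hR
  apply Finset.eq_singleton_iff_nonempty_unique_mem.2 ⟨hne, ?_⟩
  intro u hu
  have := hsub hu
  rw [halts] at this
  rcases Finset.mem_insert.1 this with rfl | h
  · rfl
  · rw [Finset.mem_singleton.1 h] at hu
    exact absurd hu hnoty

lemma margin_comm (P : Profile α) (u w : α) : Margin P u w = - Margin P w u := by
  unfold Margin; ring

lemma margin_combine {P Q : Profile α} (hd : Disjoint P.voters Q.voters) (u w : α) :
    Margin (P.combine Q) u w = Margin P u w + Margin Q u w := by
  have key : ∀ a b : α,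
      ((P.combine Q).voters.filter (fun i => (P.combine Q).rel i a b = true)).card
        = (P.voters.filter (fun i => P.rel i a b = true)).card
          + (Q.voters.filter (fun i => Q.rel i a b = true)).card := by
    intro a b
    show ((P.voters ∪ Q.voters).filter
        (fun i => (if i ∈ P.voters then P.rel i a b else Q.rel i a b) = true)).card = _
    rw [Finset.filter_union, Finset.card_union_of_disjoint (Finset.disjoint_filter_filter hd)]
    have e1 : P.voters.filter (fun i => (if i ∈ P.voters then P.rel i a b else Q.rel i a b) = true)
        = P.voters.filter (fun i => P.rel i a b = true) := by
      apply Finset.filter_congr; intro i hi; simp [hi]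
    have e2 : Q.voters.filter (fun i => (if i ∈ P.voters then P.rel i a b else Q.rel i a b) = true)
        = Q.voters.filter (fun i => Q.rel i a b = true) := by
      apply Finset.filter_congr; intro i hi
      have hnp : i ∉ P.voters := Finset.disjoint_right.1 hd hi
      simp [hnp]
    rw [e1, e2]
  unfold Margin
  rw [key, key]
  push_cast
  ring

/-- The linear order `x > y > z` as a boolean relation. -/
def lin3 (x y z : α) : α → α → Bool := fun u v =>
  (decide (u = x) && (decide (v = y) || decide (v = z))) || (decide (u = y) && decide (v = z))

lemma isLinearOn_lin3 {x y z : α} (hxy : x ≠ y) (hxz : x ≠ z) (hyz : y ≠ z)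
    {X : Finset α} (hX : ∀ u ∈ X, u = x ∨ u = y ∨ u = z) :
    IsLinearOn (lin3 x y z) X := by
  refine ⟨?_, ?_, ?_, ?_⟩
  · intro a ha
    rcases hX a ha with rfl | rfl | rfl <;>
      simp [lin3, hxy, hxz, hyz, Ne.symm hxy, Ne.symm hxz, Ne.symm hyz]
  · intro a ha b hb c hc h1 h2
    rcases hX a ha with rfl | rfl | rfl <;> rcases hX b hb with rfl | rfl | rfl <;>
      rcases hX c hc with rfl | rfl | rfl <;>
      simp_all [lin3, hxy, hxz, hyz, Ne.symm hxy, Ne.symm hxz, Ne.symm hyz]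
  · intro a ha b hb hab
    rcases hX a ha with rfl | rfl | rfl <;> rcases hX b hb with rfl | rfl | rfl <;>
      simp_all [lin3, hxy, hxz, hyz, Ne.symm hxy, Ne.symm hxz, Ne.symm hyz]
  · intro a ha b hb hab
    rcases hX a ha with rfl | rfl | rfl <;> rcases hX b hb with rfl | rfl | rfl <;>
      simp_all [lin3, hxy, hxz, hyz, Ne.symm hxy, Ne.symm hxz, Ne.symm hyz]

lemma linear_props {r : α → α → Bool} {X : Finset α} (h : IsLinearOn r X) :
    (∀ a ∈ X, ∀ b ∈ X, r a b = true → r b a = false) ∧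
    (∀ a ∈ X, ∀ b ∈ X, ∀ c ∈ X, r a b = false → r b c = false → r a c = false) := by
  obtain ⟨hirr, htr, htot, hasym⟩ := h
  refine ⟨fun a ha b hb hab => hasym a ha b hb hab, ?_⟩
  intro a ha b hb c hc hab hbc
  cases hac : r a c with
  | false => rfl
  | true =>
    exfalso
    by_cases he : a = b
    · rw [he] at hac
      rw [hac] at hbc
      simp at hbc
    · rcases htot a ha b hb he with h1 | h1
      · rw [h1] at hab; simp at hab
      · have := htr b hb a ha c hc h1 hac
        rw [this] at hbc; simp at hbc

/-- Relation of the block profile with voters `N, …, N+5`. -/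
def blkRel (N : ℕ) (x y z : α) : ℕ → α → α → Bool := fun i =>
  if i = N then lin3 x y z
  else if i = N + 1 then lin3 x z y
  else if i = N + 2 then lin3 y x z
  else if i = N + 3 then lin3 y z x
  else if i = N + 4 then lin3 z x y
  else lin3 z y x

/-- The block profile on `{x, y, z}` with voters `N, …, N+5`. -/
def blk (N : ℕ) (X : Finset α) (x y z : α) : Profile α :=
  ⟨{N, N+1, N+2, N+3, N+4, N+5}, X, blkRel N x y z⟩

lemma blkRel_e0 (N : ℕ) (x y z : α) : blkRel N x y z N = lin3 x y z := by
  unfold blkRel; rw [if_pos rfl]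
lemma blkRel_e1 (N : ℕ) (x y z : α) : blkRel N x y z (N+1) = lin3 x z y := by
  unfold blkRel; rw [if_neg (by omega), if_pos rfl]
lemma blkRel_e2 (N : ℕ) (x y z : α) : blkRel N x y z (N+2) = lin3 y x z := by
  unfold blkRel; rw [if_neg (by omega), if_neg (by omega), if_pos rfl]
lemma blkRel_e3 (N : ℕ) (x y z : α) : blkRel N x y z (N+3) = lin3 y z x := by
  unfold blkRel; rw [if_neg (by omega), if_neg (by omega), if_neg (by omega), if_pos rfl]
lemma blkRel_e4 (N : ℕ) (x y z : α) : blkRel N x y z (N+4) = lin3 z x y := by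
  unfold blkRel
  rw [if_neg (by omega), if_neg (by omega), if_neg (by omega), if_neg (by omega), if_pos rfl]
lemma blkRel_e5 (N : ℕ) (x y z : α) : blkRel N x y z (N+5) = lin3 z y x := by
  unfold blkRel
  rw [if_neg (by omega), if_neg (by omega), if_neg (by omega), if_neg (by omega),
    if_neg (by omega)]

lemma lin3_match {x y z : α} (hxy : x ≠ y) (hxz : x ≠ z) (hyz : y ≠ z)
    {X : Finset α} (hmem : ∀ u ∈ X, u = x ∨ u = y ∨ u = z) (r : α → α → Bool)
    (h1 : r x y = true) (h2 : r y z = true) (h3 : r x z = true)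
    (h4 : r y x = false) (h5 : r z y = false) (h6 : r z x = false)
    (hxx : r x x = false) (hyy : r y y = false) (hzz : r z z = false) :
    ∀ u ∈ X, ∀ v ∈ X, lin3 x y z u v = r u v := by
  intro u hu v hv
  rcases hmem u hu with rfl | rfl | rfl <;> rcases hmem v hv with rfl | rfl | rfl <;>
    simp [lin3, hxy, hxz, hyz, Ne.symm hxy, Ne.symm hxz, Ne.symm hyz,
      h1, h2, h3, h4, h5, h6, hxx, hyy, hzz]

lemma mem_blk_voters (N : ℕ) (X : Finset α) (x y z : α) {j : ℕ} :
    j ∈ (blk N X x y z).voters ↔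
      (j = N ∨ j = N+1 ∨ j = N+2 ∨ j = N+3 ∨ j = N+4 ∨ j = N+5) := by
  simp [blk]

lemma blk_rel (N : ℕ) (X : Finset α) (x y z : α) : (blk N X x y z).rel = blkRel N x y z := rfl

set_option maxHeartbeats 1000000 in
lemma isBlock_blk {x y z : α} (hxy : x ≠ y) (hxz : x ≠ z) (hyz : y ≠ z) (N : ℕ)
    {X : Finset α} (hX : X = {x, y, z}) :
    IsBlock X (blk N X x y z) := by
  have hmem : ∀ u ∈ X, u = x ∨ u = y ∨ u = z := by
    intro u hu; rw [hX] at hu; simpa using hu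
  have hxX : x ∈ X := by rw [hX]; simp
  have hyX : y ∈ X := by rw [hX]; simp
  have hzX : z ∈ X := by rw [hX]; simp
  have hlin : ∀ i ∈ (blk N X x y z).voters, IsLinearOn ((blk N X x y z).rel i) X := by
    intro i hi
    rcases (mem_blk_voters N X x y z).1 hi with h | h | h | h | h | h <;> rw [h, blk_rel]
    · rw [blkRel_e0]
      exact isLinearOn_lin3 hxy hxz hyz hmem
    · rw [blkRel_e1]
      exact isLinearOn_lin3 hxz hxy (Ne.symm hyz) (fun u hu => by
        rcases hmem u hu with h | h | h <;> tauto)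
    · rw [blkRel_e2]
      exact isLinearOn_lin3 (Ne.symm hxy) hyz hxz (fun u hu => by
        rcases hmem u hu with h | h | h <;> tauto)
    · rw [blkRel_e3]
      exact isLinearOn_lin3 hyz (Ne.symm hxy) (Ne.symm hxz) (fun u hu => by
        rcases hmem u hu with h | h | h <;> tauto)
    · rw [blkRel_e4]
      exact isLinearOn_lin3 (Ne.symm hxz) (Ne.symm hyz) hxy (fun u hu => by
        rcases hmem u hu with h | h | h <;> tauto)
    · rw [blkRel_e5]
      exact isLinearOn_lin3 (Ne.symm hyz) (Ne.symm hxz) (Ne.symm hxy) (fun u hu => by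
        rcases hmem u hu with h | h | h <;> tauto)
  refine ⟨rfl, hlin, ?_⟩
  intro r hr
  obtain ⟨hirr, htr, htot, hasym⟩ := hr
  have hxx := hirr x hxX
  have hyy := hirr y hyX
  have hzz := hirr z hzX
  -- derive reverse values
  have hrev : ∀ u ∈ X, ∀ v ∈ X, u ≠ v → r u v = false → r v u = true := by
    intro u hu v hv huv h
    rcases htot u hu v hv huv with h' | h'
    · rw [h'] at h; simp at h
    · exact h'
  cases hab : r x y <;> cases hbc : r y z <;> cases hac : r x z
  -- FFF : z > y > x
  · have hba := hrev x hxX y hyX hxy hab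
    have hcb := hrev y hyX z hzX hyz hbc
    have hca := hrev x hxX z hzX hxz hac
    refine ⟨N+5, ⟨by rw [mem_blk_voters]; tauto, ?_⟩, ?_⟩
    · rw [blk_rel, blkRel_e5]
      exact lin3_match (Ne.symm hyz) (Ne.symm hxz) (Ne.symm hxy)
        (fun u hu => by rcases hmem u hu with h | h | h <;> tauto) r
        hcb hba hca hbc hab hac hzz hyy hxx
    · rintro j ⟨hjv, hjm⟩
      have hj1 := hjm x hxX y hyX
      have hj2 := hjm y hyX z hzX
      have hj3 := hjm x hxX z hzX
      rw [mem_blk_voters] at hjv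
      rw [blk_rel] at hj1 hj2 hj3
      clear hjm hlin hrev hmem
      rcases hjv with h | h | h | h | h | h <;> rw [h] at hj1 hj2 hj3 ⊢ <;>
        simp only [blkRel_e0, blkRel_e1, blkRel_e2, blkRel_e3, blkRel_e4, blkRel_e5]
          at hj1 hj2 hj3 <;>
        simp [lin3, hxy, hxz, hyz, Ne.symm hxy, Ne.symm hxz, Ne.symm hyz,
          hab, hbc, hac] at hj1 hj2 hj3 ⊢
  -- FFT : impossible
  · exfalso
    have hba := hrev x hxX y hyX hxy hab
    have hcb := hrev y hyX z hzX hyz hbc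
    have := htr z hzX y hyX x hxX hcb hba
    rw [hasym x hxX z hzX hac] at this
    simp at this
  -- FTF : y > z > x
  · have hba := hrev x hxX y hyX hxy hab
    have hca := hrev x hxX z hzX hxz hac
    have hcb := hasym y hyX z hzX hbc
    refine ⟨N+3, ⟨by rw [mem_blk_voters]; tauto, ?_⟩, ?_⟩
    · rw [blk_rel, blkRel_e3]
      exact lin3_match hyz (Ne.symm hxy) (Ne.symm hxz)
        (fun u hu => by rcases hmem u hu with h | h | h <;> tauto) r
        hbc hca hba hcb hac hab hyy hzz hxx
    · rintro j ⟨hjv, hjm⟩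
      have hj1 := hjm x hxX y hyX
      have hj2 := hjm y hyX z hzX
      have hj3 := hjm x hxX z hzX
      rw [mem_blk_voters] at hjv
      rw [blk_rel] at hj1 hj2 hj3
      clear hjm hlin hrev hmem
      rcases hjv with h | h | h | h | h | h <;> rw [h] at hj1 hj2 hj3 ⊢ <;>
        simp only [blkRel_e0, blkRel_e1, blkRel_e2, blkRel_e3, blkRel_e4, blkRel_e5]
          at hj1 hj2 hj3 <;>
        simp [lin3, hxy, hxz, hyz, Ne.symm hxy, Ne.symm hxz, Ne.symm hyz,
          hab, hbc, hac] at hj1 hj2 hj3 ⊢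
  -- FTT : y > x > z
  · have hba := hrev x hxX y hyX hxy hab
    have hcb := hasym y hyX z hzX hbc
    have hca := hasym x hxX z hzX hac
    refine ⟨N+2, ⟨by rw [mem_blk_voters]; tauto, ?_⟩, ?_⟩
    · rw [blk_rel, blkRel_e2]
      exact lin3_match (Ne.symm hxy) hyz hxz
        (fun u hu => by rcases hmem u hu with h | h | h <;> tauto) r
        hba hac hbc hab hca hcb hyy hxx hzz
    · rintro j ⟨hjv, hjm⟩
      have hj1 := hjm x hxX y hyX
      have hj2 := hjm y hyX z hzX
      have hj3 := hjm x hxX z hzX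
      rw [mem_blk_voters] at hjv
      rw [blk_rel] at hj1 hj2 hj3
      clear hjm hlin hrev hmem
      rcases hjv with h | h | h | h | h | h <;> rw [h] at hj1 hj2 hj3 ⊢ <;>
        simp only [blkRel_e0, blkRel_e1, blkRel_e2, blkRel_e3, blkRel_e4, blkRel_e5]
          at hj1 hj2 hj3 <;>
        simp [lin3, hxy, hxz, hyz, Ne.symm hxy, Ne.symm hxz, Ne.symm hyz,
          hab, hbc, hac] at hj1 hj2 hj3 ⊢
  -- TFF : z > x > y
  · have hba := hasym x hxX y hyX hab
    have hcb := hrev y hyX z hzX hyz hbc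
    have hca := hrev x hxX z hzX hxz hac
    refine ⟨N+4, ⟨by rw [mem_blk_voters]; tauto, ?_⟩, ?_⟩
    · rw [blk_rel, blkRel_e4]
      exact lin3_match (Ne.symm hxz) (Ne.symm hyz) hxy
        (fun u hu => by rcases hmem u hu with h | h | h <;> tauto) r
        hca hab hcb hac hba hbc hzz hxx hyy
    · rintro j ⟨hjv, hjm⟩
      have hj1 := hjm x hxX y hyX
      have hj2 := hjm y hyX z hzX
      have hj3 := hjm x hxX z hzX
      rw [mem_blk_voters] at hjv
      rw [blk_rel] at hj1 hj2 hj3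
      clear hjm hlin hrev hmem
      rcases hjv with h | h | h | h | h | h <;> rw [h] at hj1 hj2 hj3 ⊢ <;>
        simp only [blkRel_e0, blkRel_e1, blkRel_e2, blkRel_e3, blkRel_e4, blkRel_e5]
          at hj1 hj2 hj3 <;>
        simp [lin3, hxy, hxz, hyz, Ne.symm hxy, Ne.symm hxz, Ne.symm hyz,
          hab, hbc, hac] at hj1 hj2 hj3 ⊢
  -- TFT : x > z > y
  · have hba := hasym x hxX y hyX hab
    have hcb := hrev y hyX z hzX hyz hbc
    have hca := hasym x hxX z hzX hac
    refine ⟨N+1, ⟨by rw [mem_blk_voters]; tauto, ?_⟩, ?_⟩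
    · rw [blk_rel, blkRel_e1]
      exact lin3_match hxz hxy (Ne.symm hyz)
        (fun u hu => by rcases hmem u hu with h | h | h <;> tauto) r
        hac hcb hab hca hbc hba hxx hzz hyy
    · rintro j ⟨hjv, hjm⟩
      have hj1 := hjm x hxX y hyX
      have hj2 := hjm y hyX z hzX
      have hj3 := hjm x hxX z hzX
      rw [mem_blk_voters] at hjv
      rw [blk_rel] at hj1 hj2 hj3
      clear hjm hlin hrev hmem
      rcases hjv with h | h | h | h | h | h <;> rw [h] at hj1 hj2 hj3 ⊢ <;>
        simp only [blkRel_e0, blkRel_e1, blkRel_e2, blkRel_e3, blkRel_e4, blkRel_e5]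
          at hj1 hj2 hj3 <;>
        simp [lin3, hxy, hxz, hyz, Ne.symm hxy, Ne.symm hxz, Ne.symm hyz,
          hab, hbc, hac] at hj1 hj2 hj3 ⊢
  -- TTF : impossible
  · exfalso
    have := htr x hxX y hyX z hzX hab hbc
    rw [hac] at this
    simp at this
  -- TTT : x > y > z
  · have hba := hasym x hxX y hyX hab
    have hcb := hasym y hyX z hzX hbc
    have hca := hasym x hxX z hzX hac
    refine ⟨N, ⟨by rw [mem_blk_voters]; tauto, ?_⟩, ?_⟩
    · rw [blk_rel, blkRel_e0]
      exact lin3_match hxy hxz hyz hmem r hab hbc hac hba hcb hca hxx hyy hzz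
    · rintro j ⟨hjv, hjm⟩
      have hj1 := hjm x hxX y hyX
      have hj2 := hjm y hyX z hzX
      have hj3 := hjm x hxX z hzX
      rw [mem_blk_voters] at hjv
      rw [blk_rel] at hj1 hj2 hj3
      clear hjm hlin hrev hmem
      rcases hjv with h | h | h | h | h | h <;> rw [h] at hj1 hj2 hj3 ⊢ <;>
        simp only [blkRel_e0, blkRel_e1, blkRel_e2, blkRel_e3, blkRel_e4, blkRel_e5]
          at hj1 hj2 hj3 <;>
        simp [lin3, hxy, hxz, hyz, Ne.symm hxy, Ne.symm hxz, Ne.symm hyz,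
          hab, hbc, hac] at hj1 hj2 hj3 ⊢

lemma card3' {p q r : ℕ} (h1 : p ≠ q) (h2 : p ≠ r) (h3 : q ≠ r) :
    ({p, q, r} : Finset ℕ).card = 3 := by
  have h1' : p ∉ ({q, r} : Finset ℕ) := by simp [h1, h2]
  have h2' : q ∉ ({r} : Finset ℕ) := by simp [h3]
  rw [Finset.card_insert_of_notMem h1', Finset.card_insert_of_notMem h2',
    Finset.card_singleton]

lemma isSWO_of_linear {P : Profile α} (h : ∀ i ∈ P.voters, IsLinearOn (P.rel i) P.alts) :
    IsSWO P := fun i hi => linear_props (h i hi)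

lemma blk_mem_Dom23 {x y z : α} (hxy : x ≠ y) (hxz : x ≠ z) (hyz : y ≠ z) (N : ℕ)
    {X : Finset α} (hX : X = {x, y, z}) (hcard : X.card = 3) :
    blk N X x y z ∈ Dom23 α := by
  obtain ⟨_, hlin, _⟩ := isBlock_blk hxy hxz hyz N hX
  exact ⟨isSWO_of_linear hlin, ⟨N, by rw [mem_blk_voters]; tauto⟩, Or.inr hcard⟩

lemma blk_margin_xy {x y z : α} (hxy : x ≠ y) (hxz : x ≠ z) (hyz : y ≠ z) (N : ℕ)
    (X : Finset α) : Margin (blk N X x y z) x y = 0 := by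
  have hA : ((blk N X x y z).voters.filter (fun i => (blk N X x y z).rel i x y = true))
      = ({N, N+1, N+4} : Finset ℕ) := by
    show (({N, N+1, N+2, N+3, N+4, N+5} : Finset ℕ).filter
      (fun i => blkRel N x y z i x y = true)) = _
    simp [Finset.filter_insert, Finset.filter_singleton, blkRel_e0, blkRel_e1, blkRel_e2,
      blkRel_e3, blkRel_e4, blkRel_e5, lin3, hxy, hxz, hyz,
      Ne.symm hxy, Ne.symm hxz, Ne.symm hyz]
  have hB : ((blk N X x y z).voters.filter (fun i => (blk N X x y z).rel i y x = true))
      = ({N+2, N+3, N+5} : Finset ℕ) := by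
    show (({N, N+1, N+2, N+3, N+4, N+5} : Finset ℕ).filter
      (fun i => blkRel N x y z i y x = true)) = _
    simp [Finset.filter_insert, Finset.filter_singleton, blkRel_e0, blkRel_e1, blkRel_e2,
      blkRel_e3, blkRel_e4, blkRel_e5, lin3, hxy, hxz, hyz,
      Ne.symm hxy, Ne.symm hxz, Ne.symm hyz]
  have c1 : ({N, N+1, N+4} : Finset ℕ).card = 3 :=
    card3' (by omega) (by omega) (by omega)
  have c2 : ({N+2, N+3, N+5} : Finset ℕ).card = 3 :=
    card3' (by omega) (by omega) (by omega)
  unfold Margin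
  rw [hA, hB, c1, c2]
  ring

lemma blk_margin_xz {x y z : α} (hxy : x ≠ y) (hxz : x ≠ z) (hyz : y ≠ z) (N : ℕ)
    (X : Finset α) : Margin (blk N X x y z) x z = 0 := by
  have hA : ((blk N X x y z).voters.filter (fun i => (blk N X x y z).rel i x z = true))
      = ({N, N+1, N+2} : Finset ℕ) := by
    show (({N, N+1, N+2, N+3, N+4, N+5} : Finset ℕ).filter
      (fun i => blkRel N x y z i x z = true)) = _
    simp [Finset.filter_insert, Finset.filter_singleton, blkRel_e0, blkRel_e1, blkRel_e2,
      blkRel_e3, blkRel_e4, blkRel_e5, lin3, hxy, hxz, hyz,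
      Ne.symm hxy, Ne.symm hxz, Ne.symm hyz]
  have hB : ((blk N X x y z).voters.filter (fun i => (blk N X x y z).rel i z x = true))
      = ({N+3, N+4, N+5} : Finset ℕ) := by
    show (({N, N+1, N+2, N+3, N+4, N+5} : Finset ℕ).filter
      (fun i => blkRel N x y z i z x = true)) = _
    simp [Finset.filter_insert, Finset.filter_singleton, blkRel_e0, blkRel_e1, blkRel_e2,
      blkRel_e3, blkRel_e4, blkRel_e5, lin3, hxy, hxz, hyz,
      Ne.symm hxy, Ne.symm hxz, Ne.symm hyz]
  have c1 : ({N, N+1, N+2} : Finset ℕ).card = 3 :=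
    card3' (by omega) (by omega) (by omega)
  have c2 : ({N+3, N+4, N+5} : Finset ℕ).card = 3 :=
    card3' (by omega) (by omega) (by omega)
  unfold Margin
  rw [hA, hB, c1, c2]
  ring

lemma blk_margin_yz {x y z : α} (hxy : x ≠ y) (hxz : x ≠ z) (hyz : y ≠ z) (N : ℕ)
    (X : Finset α) : Margin (blk N X x y z) y z = 0 := by
  have hA : ((blk N X x y z).voters.filter (fun i => (blk N X x y z).rel i y z = true))
      = ({N, N+2, N+3} : Finset ℕ) := by
    show (({N, N+1, N+2, N+3, N+4, N+5} : Finset ℕ).filter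
      (fun i => blkRel N x y z i y z = true)) = _
    simp [Finset.filter_insert, Finset.filter_singleton, blkRel_e0, blkRel_e1, blkRel_e2,
      blkRel_e3, blkRel_e4, blkRel_e5, lin3, hxy, hxz, hyz,
      Ne.symm hxy, Ne.symm hxz, Ne.symm hyz]
  have hB : ((blk N X x y z).voters.filter (fun i => (blk N X x y z).rel i z y = true))
      = ({N+1, N+4, N+5} : Finset ℕ) := by
    show (({N, N+1, N+2, N+3, N+4, N+5} : Finset ℕ).filter
      (fun i => blkRel N x y z i z y = true)) = _
    simp [Finset.filter_insert, Finset.filter_singleton, blkRel_e0, blkRel_e1, blkRel_e2,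
      blkRel_e3, blkRel_e4, blkRel_e5, lin3, hxy, hxz, hyz,
      Ne.symm hxy, Ne.symm hxz, Ne.symm hyz]
  have c1 : ({N, N+2, N+3} : Finset ℕ).card = 3 :=
    card3' (by omega) (by omega) (by omega)
  have c2 : ({N+1, N+4, N+5} : Finset ℕ).card = 3 :=
    card3' (by omega) (by omega) (by omega)
  unfold Margin
  rw [hA, hB, c1, c2]
  ring

end Aux

/-- A voting method on the domain of profiles with two or three alternatives
satisfying anonymity, neutrality, weak positive responsiveness, near immunity
to spoilers, homogeneity, and block preservation is Condorcet consistent on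
three-alternative profiles. -/
theorem condorcet_consistency_from_axioms {α : Type*} [DecidableEq α]
    (hX : ∃ x y z : α, x ≠ y ∧ x ≠ z ∧ y ≠ z)
    (F : Profile α → Finset α)
    (hF : ∀ P ∈ Dom23 α, (F P).Nonempty ∧ F P ⊆ P.alts)
    (anon : Anonymity (Dom23 α) F)
    (neut : Neutrality (Dom23 α) F)
    (wpr : WeakPositiveResponsiveness (Dom23 α) F)
    (nits : NearImmunityToSpoilers (Dom23 α) F)
    (hom : Homogeneity (Dom23 α) F)
    (bp : BlockPreservation (Dom23 α) F) :
    ∀ P ∈ Dom23 α, P.alts.card = 3 →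
      ∀ c ∈ P.alts, (∀ x ∈ P.alts, x ≠ c → 0 < Margin P c x) →
        F P = {c} := by
  intro P hP h3 c hc hcon
  obtain ⟨hswoP, hvneP, _⟩ := id hP
  obtain ⟨hne, hsub⟩ := hF P hP
  apply Finset.eq_singleton_iff_nonempty_unique_mem.2 ⟨hne, ?_⟩
  intro b hbF
  by_contra hbceq
  have hbc' : b ≠ c := hbceq
  have hbalts : b ∈ P.alts := hsub hbF
  -- find the third alternative a
  have hbmem : b ∈ P.alts.erase c := Finset.mem_erase.2 ⟨hbc', hbalts⟩
  have hcard1 : ((P.alts.erase c).erase b).card = 1 := by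
    rw [Finset.card_erase_of_mem hbmem, Finset.card_erase_of_mem hc, h3]
  obtain ⟨a, ha'⟩ := Finset.card_eq_one.1 hcard1
  have haY : a ∈ (P.alts.erase c).erase b := by rw [ha']; simp
  have hab : a ≠ b := (Finset.mem_erase.1 haY).1
  have hac : a ≠ c := (Finset.mem_erase.1 (Finset.mem_of_mem_erase haY)).1
  have ha : a ∈ P.alts := Finset.mem_of_mem_erase (Finset.mem_of_mem_erase haY)
  have halts : P.alts = {a, b, c} := by
    refine (Finset.eq_of_subset_of_card_le ?_ ?_).symm
    · intro u hu
      rcases Finset.mem_insert.1 hu with rfl | hu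
      · exact ha
      rcases Finset.mem_insert.1 hu with rfl | hu
      · exact hbalts
      · rw [Finset.mem_singleton.1 hu]; exact hc
    · rw [h3, Finset.card_insert_of_notMem (by simp [hab, hac]),
        Finset.card_insert_of_notMem (by simp [hbc']), Finset.card_singleton]
  have hmemP : ∀ u ∈ P.alts, u = a ∨ u = b ∨ u = c := by
    intro u hu; rw [halts] at hu; simpa using hu
  have hp : 0 < Margin P c a := hcon a ha hac
  have hq : 0 < Margin P c b := hcon b hbalts hbc'
  -- double twice
  obtain ⟨hdD, hdsub⟩ := hom P hP
  obtain ⟨hddD, hddsub⟩ := hom _ hdD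
  have hmdd : ∀ u w : α, Margin P.double.double u w = 4 * Margin P u w := by
    intro u w
    rw [margin_double, margin_double]; ring
  -- a block with fresh voters
  set N := P.double.double.voters.sup id + 1 with hN
  set Blk := blk N P.alts a b c with hBlkdef
  have hBlkD : Blk ∈ Dom23 α := blk_mem_Dom23 hab hac hbc' N halts h3
  have hdisj : Disjoint P.double.double.voters Blk.voters := by
    rw [Finset.disjoint_right]
    intro j hj hjd
    have hle := Finset.le_sup (f := id) hjd
    simp only [id] at hle
    rw [hBlkdef, mem_blk_voters] at hj
    omega
  have hblock : IsBlock P.double.double.alts Blk := isBlock_blk hab hac hbc' N halts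
  obtain ⟨hQ0D, hQ0sub⟩ := bp P.double.double hddD Blk hBlkD hdisj hblock
  set Q0 := P.double.double.combine Blk with hQ0def
  have hbQ0 : b ∈ F Q0 := hQ0sub (hddsub (hdsub hbF))
  obtain ⟨hQ0swo, hQ0vne, hQ0card⟩ := id hQ0D
  have hBca : Margin Blk c a = 0 := by
    rw [margin_comm, hBlkdef, blk_margin_xz hab hac hbc' N P.alts]
    ring
  have hBcb : Margin Blk c b = 0 := by
    rw [margin_comm, hBlkdef, blk_margin_yz hab hac hbc' N P.alts]
    ring
  have hQ0ca : Margin Q0 c a = 4 * Margin P c a := by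
    rw [hQ0def, margin_combine hdisj, hmdd, hBca]; ring
  have hQ0cb : Margin Q0 c b = 4 * Margin P c b := by
    rw [hQ0def, margin_combine hdisj, hmdd, hBcb]; ring
  -- the mover : voter N+1 with ballot a > c > b
  have hj0Blk : (N+1) ∈ Blk.voters := by
    rw [hBlkdef, mem_blk_voters]
    exact Or.inr (Or.inl rfl)
  have hj0nd : (N+1) ∉ P.double.double.voters := by
    intro h
    have := Finset.le_sup (f := id) h
    simp only [id] at this
    omega
  have hj0Q0 : (N+1) ∈ Q0.voters := Finset.mem_union_right _ hj0Blk
  have hrelj0 : Q0.rel (N+1) = lin3 a c b := by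
    funext u w
    show (P.double.double.combine Blk).rel (N+1) u w = lin3 a c b u w
    simp only [Profile.combine]
    rw [if_neg hj0nd, hBlkdef, blk_rel, blkRel_e1]
  -- values of the old and new ballots
  have o1 : lin3 a c b a b = true := by simp [lin3]
  have o2 : lin3 a c b c b = true := by simp [lin3]
  have o3 : lin3 a c b a c = true := by simp [lin3]
  have o4 : lin3 a c b c a = false := by
    simp [lin3, hab, hac, hbc', Ne.symm hab, Ne.symm hac, Ne.symm hbc']
  have o5 : lin3 a c b b c = false := by
    simp [lin3, hab, hac, hbc', Ne.symm hab, Ne.symm hac, Ne.symm hbc']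
  have o7 : lin3 a c b a a = false := by
    simp [lin3, hab, hac, hbc', Ne.symm hab, Ne.symm hac, Ne.symm hbc']
  have o8 : lin3 a c b c c = false := by
    simp [lin3, hab, hac, hbc', Ne.symm hab, Ne.symm hac, Ne.symm hbc']
  have n1 : lin3 b a c b a = true := by simp [lin3]
  have n2 : lin3 b a c b c = true := by simp [lin3]
  have n3 : lin3 b a c a c = true := by simp [lin3]
  have n4 : lin3 b a c c b = false := by
    simp [lin3, hab, hac, hbc', Ne.symm hab, Ne.symm hac, Ne.symm hbc']
  have n6 : lin3 b a c c a = false := by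
    simp [lin3, hab, hac, hbc', Ne.symm hab, Ne.symm hac, Ne.symm hbc']
  have n7 : lin3 b a c a a = false := by
    simp [lin3, hab, hac, hbc', Ne.symm hab, Ne.symm hac, Ne.symm hbc']
  have n8 : lin3 b a c c c = false := by
    simp [lin3, hab, hac, hbc', Ne.symm hab, Ne.symm hac, Ne.symm hbc']
  set Q1 := Q0.updateVoter (N+1) (lin3 b a c) with hQ1def
  have hrelQ1j0 : Q1.rel (N+1) = lin3 b a c := by
    rw [hQ1def]
    simp [Profile.updateVoter]
  have hrelQ1ne : ∀ i, i ≠ (N+1) → Q1.rel i = Q0.rel i := by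
    intro i hi
    rw [hQ1def]
    simp only [Profile.updateVoter]
    rw [if_neg hi]
  have hQ1altsP : Q1.alts = P.alts := rfl
  have hmemQ1 : ∀ u ∈ Q1.alts, u = b ∨ u = a ∨ u = c := by
    rw [hQ1altsP]
    intro u hu
    rcases hmemP u hu with h | h | h
    · exact Or.inr (Or.inl h)
    · exact Or.inl h
    · exact Or.inr (Or.inr h)
  have hQ1swo : IsSWO Q1 := by
    intro i hi
    by_cases hij : i = (N+1)
    · have hri : Q1.rel i = lin3 b a c := by rw [hij, hrelQ1j0]
      have hlin : IsLinearOn (lin3 b a c) Q1.alts :=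
        isLinearOn_lin3 (Ne.symm hab) hbc' hac hmemQ1
      have hprops := linear_props hlin
      rw [hri]
      exact hprops
    · have hri : Q1.rel i = Q0.rel i := hrelQ1ne i hij
      rw [hri]
      exact hQ0swo i hi
  have hQ1D : Q1 ∈ Dom23 α := ⟨hQ1swo, hQ0vne, hQ0card⟩
  have hmove : MoveLastToFirst Q0 Q1 b := by
    refine ⟨rfl, rfl, hbalts, N+1, hj0Q0, ?_, ?_, ?_, ?_⟩
    · intro u hu hub
      rw [hrelj0]
      rcases hmemP u hu with rfl | rfl | rfl
      · exact o1
      · exact absurd rfl hub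
      · exact o2
    · intro u hu hub
      rw [hrelQ1j0]
      rcases hmemP u hu with rfl | rfl | rfl
      · exact n1
      · exact absurd rfl hub
      · exact n2
    · intro u hu hub w hw hwb
      rw [hrelQ1j0, hrelj0]
      rcases hmemP u hu with rfl | rfl | rfl
      · rcases hmemP w hw with rfl | rfl | rfl
        · rw [n7, o7]
        · exact absurd rfl hwb
        · rw [n3, o3]
      · exact absurd rfl hub
      · rcases hmemP w hw with rfl | rfl | rfl
        · rw [n6, o4]
        · exact absurd rfl hwb
        · rw [n8, o8]
    · intro j hj hjne u hu w hw
      rw [hrelQ1ne j hjne]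
  have hFQ1 : F Q1 = {b} := wpr Q0 hQ0D Q1 hQ1D b hbQ0 hmove
  have hQ1ca : Margin Q1 c a = Margin Q0 c a := by
    apply margin_update_same
    · rw [hrelj0, n6, o4]
    · rw [hrelj0, n3, o3]
  have hQ1cb : Margin Q1 c b = Margin Q0 c b - 2 := by
    apply margin_update_flip hj0Q0
    · rw [hrelj0]; exact o2
    · rw [hrelj0]; exact o5
    · exact n4
    · exact n2
  have hQ1ca' : 0 < Margin Q1 c a := by
    rw [hQ1ca, hQ0ca]; linarith
  have hQ1cb' : 0 < Margin Q1 c b := by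
    rw [hQ1cb, hQ0cb]
    have : 1 ≤ Margin P c b := hq
    linarith
  have hQ1alts : Q1.alts = P.alts := rfl
  -- the two restricted profiles
  have hcsub : (Q1.alts.erase a) ⊆ Q1.alts := Finset.erase_subset a Q1.alts
  have hQmD : Q1.minus a ∈ Dom23 α := by
    refine ⟨isSWO_restrict hQ1swo hcsub, hQ0vne, Or.inl ?_⟩
    show (Q1.alts.erase a).card = 2
    rw [hQ1alts, Finset.card_erase_of_mem ha, h3]
  have hcE : c ∈ Q1.alts.erase a := Finset.mem_erase.2 ⟨Ne.symm hac, hc⟩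
  have hbE : b ∈ Q1.alts.erase a := Finset.mem_erase.2 ⟨Ne.symm hab, hbalts⟩
  have hFQm : F (Q1.minus a) = {c} := by
    apply two_alt_majority F hF anon neut wpr hQmD hcE hbE (Ne.symm hbc')
    · show (Q1.alts.erase a).card = 2
      rw [hQ1alts, Finset.card_erase_of_mem ha, h3]
    · show 0 < Margin (Q1.restrict (Q1.alts.erase a)) c b
      rw [margin_restrict hcE hbE]
      exact hQ1cb'
  have hrsub : ({c, a} : Finset α) ⊆ Q1.alts := by
    intro u hu
    rcases Finset.mem_insert.1 hu with rfl | hu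
    · exact hc
    · rw [Finset.mem_singleton.1 hu]; exact ha
  have hQrD : Q1.restrict {c, a} ∈ Dom23 α := by
    refine ⟨isSWO_restrict hQ1swo hrsub, hQ0vne, Or.inl ?_⟩
    show ({c, a} : Finset α).card = 2
    rw [Finset.card_insert_of_notMem (by simp [Ne.symm hac]), Finset.card_singleton]
  have hcR : c ∈ ({c, a} : Finset α) := by simp
  have haR : a ∈ ({c, a} : Finset α) := by simp
  have hFQr : F (Q1.restrict {c, a}) = {c} := by
    apply two_alt_majority F hF anon neut wpr hQrD hcR haR (Ne.symm hac)
    · show ({c, a} : Finset α).card = 2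
      rw [Finset.card_insert_of_notMem (by simp [Ne.symm hac]), Finset.card_singleton]
    · show 0 < Margin (Q1.restrict {c, a}) c a
      rw [margin_restrict hcR haR]
      exact hQ1ca'
  have hanot : a ∉ F Q1 := by
    rw [hFQ1]
    simp [hab]
  have hcF : c ∈ F Q1 := nits Q1 hQ1D c hc a ha hQmD hQrD hFQm hFQr hanot
  rw [hFQ1, Finset.mem_singleton] at hcF
  exact hbc' hcF.symm

end MayMinimax
end

section
/- The Minimax MB voting method, defined on all profiles with at least two alternatives, satisfies positive responsiveness: if a ∈ MinimaxMB(P) and P' is obtained from P by one voter improving a's position in their ballot while nothing else changes (there is some b ∈ X(P) with b ≠ a such that either (a,b) ∉ P(i) and (a,b) ∈ P'(i), or (b,a) ∈ P(i) and (b,a) ∉ P'(i); for all c ∈ X(P)\{a}, (a,c) ∈ P(i) implies (a,c) ∈ P'(i) and (c,a) ∉ P(i) implies (c,a) ∉ P'(i); for all c,d ∈ X(P)\{a}, (c,d) ∈ P(i) iff (c,d) ∈ P'(i); all other voters unchanged), then MinimaxMB(P') = {a}. -/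
/-!
Formalization of notions from "An extension of May's Theorem to three
alternatives: axiomatizing Minimax voting" by Holliday and Pacuit.

The set of voters is the countably infinite set `ℕ`; the set `α` of
alternatives is a type (assumed to have at least three elements where the
paper assumes `|𝒳| ≥ 3`).
-/

namespace MayMinimax

variable {α : Type*} [DecidableEq α]

lemma margin_neg (P : Profile α) (a b : α) : Margin P b a = - Margin P a b := by
  simp [Margin]

lemma margin_self (P : Profile α) (a : α) : Margin P a a = 0 := by
  simp [Margin]

lemma card_filter_mono (s : Finset ℕ) (p q : ℕ → Bool)
    (h : ∀ j ∈ s, p j = true → q j = true) :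
    (s.filter fun j => p j = true).card ≤ (s.filter fun j => q j = true).card := by
  apply Finset.card_le_card
  intro x hx
  rw [Finset.mem_filter] at *
  exact ⟨hx.1, h x hx.1 hx.2⟩

lemma card_filter_strict (s : Finset ℕ) (p q : ℕ → Bool)
    (h : ∀ j ∈ s, p j = true → q j = true) {i : ℕ} (hi : i ∈ s)
    (hpi : ¬ p i = true) (hqi : q i = true) :
    (s.filter fun j => p j = true).card < (s.filter fun j => q j = true).card := by
  apply Finset.card_lt_card
  constructor
  · intro x hx
    rw [Finset.mem_filter] at *
    exact ⟨hx.1, h x hx.1 hx.2⟩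
  · intro hsub
    have := hsub (Finset.mem_filter.mpr ⟨hi, hqi⟩)
    exact hpi (Finset.mem_filter.mp this).2

lemma margin_mono_aux {P P' : Profile α} (hV : P'.voters = P.voters) (a c : α)
    (h1 : ∀ j ∈ P.voters, P.rel j a c = true → P'.rel j a c = true)
    (h2 : ∀ j ∈ P.voters, P'.rel j c a = true → P.rel j c a = true) :
    Margin P a c ≤ Margin P' a c := by
  unfold Margin
  rw [hV]
  have A : (P.voters.filter fun j => P.rel j a c = true).card ≤
      (P.voters.filter fun j => P'.rel j a c = true).card :=
    card_filter_mono P.voters _ _ h1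
  have B : (P.voters.filter fun j => P'.rel j c a = true).card ≤
      (P.voters.filter fun j => P.rel j c a = true).card :=
    card_filter_mono P.voters _ _ h2
  omega

lemma margin_le_mmscore (P : Profile α) {x b : α} (hb : b ∈ P.alts.erase x) :
    Margin P b x ≤ MMScore P x := by
  unfold MMScore
  have hmem : Margin P b x ∈ (P.alts.erase x).image fun c => Margin P c x :=
    Finset.mem_image_of_mem _ hb
  obtain ⟨v, hv⟩ := Finset.max_of_mem hmem
  have hle := Finset.le_max hmem
  rw [hv] at hle ⊢
  exact_mod_cast hle

lemma mmscore_mem (P : Profile α) {x : α} (h : (P.alts.erase x).Nonempty) :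
    ∃ b ∈ P.alts.erase x, MMScore P x = Margin P b x := by
  obtain ⟨v, hv⟩ := Finset.max_of_nonempty (h.image fun c => Margin P c x)
  obtain ⟨b, hb, hbv⟩ := Finset.mem_image.mp (Finset.mem_of_max hv)
  refine ⟨b, hb, ?_⟩
  unfold MMScore
  rw [hv, hbv]
  rfl

/-- Minimax MB, on the domain of all profiles (of arbitrary binary relations)
with at least two alternatives, satisfies (full) positive responsiveness. -/
theorem minimaxMB_positive_responsiveness {α : Type*} [DecidableEq α]
    (hX : ∃ x y z : α, x ≠ y ∧ x ≠ z ∧ y ≠ z) :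
    ∀ P P' : Profile α, P.voters.Nonempty → 2 ≤ P.alts.card →
      ∀ a ∈ MinimaxMB P, ImproveFor P P' a → MinimaxMB P' = {a} := by
  intro P P' hVne hcard a haMB himp
  obtain ⟨hV, hA, i, hi, ⟨b, hbA, hbna, hbcase⟩, hmono, hfix, hoth⟩ := himp
  -- basic membership facts about a
  rw [MinimaxMB, Finset.mem_filter] at haMB
  obtain ⟨haMM, haMB⟩ := haMB
  rw [Minimax, Finset.mem_filter] at haMM
  obtain ⟨haA, haMM⟩ := haMM
  -- monotonicity of margins of a over others
  have hup : ∀ c ∈ P.alts, c ≠ a → Margin P a c ≤ Margin P' a c := by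
    intro c hc hcna
    apply margin_mono_aux hV a c
    · intro j hj hjr
      by_cases hji : j = i
      · subst hji; exact (hmono c hc hcna).1 hjr
      · rw [hoth j hj hji a haA c hc]; exact hjr
    · intro j hj hjr
      by_cases hji : j = i
      · subst hji
        rcases Bool.eq_false_or_eq_true (P.rel j c a) with h | h
        · exact h
        · rw [(hmono c hc hcna).2 h] at hjr; exact absurd hjr (by simp)
      · rw [hoth j hj hji c hc a haA] at hjr; exact hjr
  -- margins among non-a alternatives are unchanged
  have hsame : ∀ c ∈ P.alts, c ≠ a → ∀ d ∈ P.alts, d ≠ a →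
      Margin P' c d = Margin P c d := by
    intro c hc hcna d hd hdna
    unfold Margin
    rw [hV]
    have e1 : P.voters.filter (fun j => P'.rel j c d = true) =
        P.voters.filter (fun j => P.rel j c d = true) := by
      apply Finset.filter_congr
      intro j hj
      by_cases hji : j = i
      · subst hji; simp only [hfix c hc hcna d hd hdna]
      · simp only [hoth j hj hji c hc d hd]
    have e2 : P.voters.filter (fun j => P'.rel j d c = true) =
        P.voters.filter (fun j => P.rel j d c = true) := by
      apply Finset.filter_congr
      intro j hj
      by_cases hji : j = i
      · subst hji; simp only [hfix d hd hdna c hc hcna]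
      · simp only [hoth j hj hji d hd c hc]
    rw [e1, e2]
  -- strict improvement against b
  have hstrict : Margin P a b < Margin P' a b := by
    have h1 : ∀ j ∈ P.voters, P.rel j a b = true → P'.rel j a b = true := by
      intro j hj hjr
      by_cases hji : j = i
      · subst hji; exact (hmono b hbA hbna).1 hjr
      · rw [hoth j hj hji a haA b hbA]; exact hjr
    have h2 : ∀ j ∈ P.voters, P'.rel j b a = true → P.rel j b a = true := by
      intro j hj hjr
      by_cases hji : j = i
      · subst hji
        rcases Bool.eq_false_or_eq_true (P.rel j b a) with h | h
        · exact h
        · rw [(hmono b hbA hbna).2 h] at hjr; exact absurd hjr (by simp)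
      · rw [hoth j hj hji b hbA a haA] at hjr; exact hjr
    unfold Margin
    rw [hV]
    rcases hbcase with ⟨hf, ht⟩ | ⟨ht, hf⟩
    · have A : (P.voters.filter fun j => P.rel j a b = true).card <
          (P.voters.filter fun j => P'.rel j a b = true).card :=
        card_filter_strict P.voters _ _ h1 hi (by simp [hf]) ht
      have B : (P.voters.filter fun j => P'.rel j b a = true).card ≤
          (P.voters.filter fun j => P.rel j b a = true).card :=
        card_filter_mono P.voters _ _ h2
      omega
    · have A : (P.voters.filter fun j => P.rel j a b = true).card ≤
          (P.voters.filter fun j => P'.rel j a b = true).card :=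
        card_filter_mono P.voters _ _ h1
      have B : (P.voters.filter fun j => P'.rel j b a = true).card <
          (P.voters.filter fun j => P.rel j b a = true).card :=
        card_filter_strict P.voters _ _ h2 hi (by simp [hf]) ht
      omega
  -- erase sets are nonempty
  have herase : ∀ x ∈ P.alts, (P.alts.erase x).Nonempty := by
    intro x hx
    rw [← Finset.card_pos, Finset.card_erase_of_mem hx]
    omega
  -- Minimax score comparisons
  have hMMup : ∀ x ∈ P.alts, x ≠ a → MMScore P x ≤ MMScore P' x := by
    intro x hx hxna
    obtain ⟨c, hc, hcval⟩ := mmscore_mem P (herase x hx)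
    have hcA : c ∈ P.alts := Finset.mem_of_mem_erase hc
    have hcx : c ≠ x := Finset.ne_of_mem_erase hc
    have hle : Margin P c x ≤ Margin P' c x := by
      by_cases hca : c = a
      · subst hca; exact hup x hx hxna
      · rw [hsame c hcA hca x hx hxna]
    have hc' : c ∈ P'.alts.erase x := by rw [hA]; exact hc
    calc MMScore P x = Margin P c x := hcval
      _ ≤ Margin P' c x := hle
      _ ≤ MMScore P' x := margin_le_mmscore P' hc'
  have hMMdown : MMScore P' a ≤ MMScore P a := by
    have hne' : (P'.alts.erase a).Nonempty := by rw [hA]; exact herase a haA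
    obtain ⟨c, hc, hcval⟩ := mmscore_mem P' hne'
    have hc2 : c ∈ P.alts.erase a := by rw [← hA]; exact hc
    have hcA : c ∈ P.alts := Finset.mem_of_mem_erase hc2
    have hca : c ≠ a := Finset.ne_of_mem_erase hc2
    have hle : Margin P' c a ≤ Margin P c a := by
      rw [margin_neg P' a c, margin_neg P a c]
      exact neg_le_neg (hup c hcA hca)
    calc MMScore P' a = Margin P' c a := hcval
      _ ≤ Margin P c a := hle
      _ ≤ MMScore P a := margin_le_mmscore P hc2
  -- a is a Minimax winner in P'
  have haMM' : ∀ x ∈ P.alts, MMScore P' a ≤ MMScore P' x := by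
    intro x hx
    by_cases hxa : x = a
    · subst hxa; exact le_refl _
    · calc MMScore P' a ≤ MMScore P a := hMMdown
        _ ≤ MMScore P x := haMM x hx
        _ ≤ MMScore P' x := hMMup x hx hxa
  have haMin' : a ∈ Minimax P' := by
    rw [Minimax, Finset.mem_filter]
    refine ⟨by rw [hA]; exact haA, ?_⟩
    intro x hx
    exact haMM' x (by rw [← hA]; exact hx)
  -- any other Minimax P' winner was a Minimax P winner
  have hback : ∀ x ∈ Minimax P', x ≠ a → x ∈ Minimax P := by
    intro x hx hxna
    rw [Minimax, Finset.mem_filter] at hx ⊢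
    obtain ⟨hxA', hxmin⟩ := hx
    have hxA : x ∈ P.alts := by rw [← hA]; exact hxA'
    refine ⟨hxA, ?_⟩
    intro y hy
    calc MMScore P x ≤ MMScore P' x := hMMup x hxA hxna
      _ ≤ MMScore P' a := hxmin a (by rw [hA]; exact haA)
      _ ≤ MMScore P a := hMMdown
      _ ≤ MMScore P y := haMM y hy
  -- marginal Borda comparisons
  have hMBa : MarginalBorda P a < MarginalBorda P' a := by
    unfold MarginalBorda
    rw [hA]
    apply Finset.sum_lt_sum
    · intro c hc
      by_cases hca : c = a
      · subst hca; rw [margin_self, margin_self]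
      · exact hup c hc hca
    · exact ⟨b, hbA, hstrict⟩
  have hMBx : ∀ x ∈ P.alts, x ≠ a → MarginalBorda P' x ≤ MarginalBorda P x := by
    intro x hx hxna
    unfold MarginalBorda
    rw [hA]
    apply Finset.sum_le_sum
    intro c hc
    by_cases hca : c = a
    · rw [hca, margin_neg P' a x, margin_neg P a x]
      exact neg_le_neg (hup x hx hxna)
    · rw [hsame x hx hxna c hc hca]
  -- strict Borda dominance over other Minimax P' winners
  have hdom : ∀ x ∈ Minimax P', x ≠ a → MarginalBorda P' x < MarginalBorda P' a := by
    intro x hx hxna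
    have hxP := hback x hx hxna
    have hxA : x ∈ P.alts := (Finset.mem_filter.mp hxP).1
    calc MarginalBorda P' x ≤ MarginalBorda P x := hMBx x hxA hxna
      _ ≤ MarginalBorda P a := haMB x hxP
      _ < MarginalBorda P' a := hMBa
  -- conclude
  ext y
  rw [MinimaxMB, Finset.mem_filter, Finset.mem_singleton]
  constructor
  · rintro ⟨hy, hymax⟩
    by_contra hya
    exact absurd (hymax a haMin') (not_le.mpr (hdom y hy hya))
  · intro hy
    rw [hy]
    refine ⟨haMin', ?_⟩
    intro c hc
    by_cases hca : c = a
    · rw [hca]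
    · exact le_of_lt (hdom c hc hca)

end MayMinimax
end
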